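/- Let n, k, m be positive natural numbers, let φ : ℝ → ℝ be convex on all of ℝ and monotone (nondecreasing), let W be an m × k real matrix all of whose entries are nonnegative, let V be an m × n real matrix, and let ω ∈ ℝ^m. Suppose z : ℝ^n → ℝ^k is a function such that for every j, the component map x ↦ (z x) j is convex on all of ℝ^n. Then for every i, the map x ↦ φ((W · (z x) + V · x + ω) i), i.e., the i-th component of the next layer obtained by applying φ componentwise to W z(x) + V x + ω, is convex on all of ℝ^n. -/

import Mathlib

open Matrix

/-- One layer of an input-convex neural network preserves convexity:
if every component of `z` is convex in `x`, `φ` is convex and nondecreasing,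
and `W` has nonnegative entries, then every component of
`φ(W z(x) + V x + ω)` is convex in `x`. -/
theorem layer_preserves_convexity
    (n k m : ℕ) (hn : 0 < n) (hk : 0 < k) (hm : 0 < m)
    (φ : ℝ → ℝ) (hφ_convex : ConvexOn ℝ Set.univ φ) (hφ_mono : Monotone φ)
    (W : Matrix (Fin m) (Fin k) ℝ) (hW : ∀ i j, 0 ≤ W i j)
    (V : Matrix (Fin m) (Fin n) ℝ) (ω : Fin m → ℝ)
    (z : (Fin n → ℝ) → (Fin k → ℝ))
    (hz : ∀ j, ConvexOn ℝ Set.univ (fun x => z x j)) :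
    ∀ i : Fin m,
      ConvexOn ℝ Set.univ (fun x => φ ((W.mulVec (z x) + V.mulVec x + ω) i)) := by
  intro i
  have h1 : ∀ s : Finset (Fin k),
      ConvexOn ℝ Set.univ (fun x => ∑ j ∈ s, W i j * z x j) := by
    intro s
    induction s using Finset.induction with
    | empty => simpa using convexOn_const (0 : ℝ) convex_univ
    | @insert j s hj ih =>
      simp only [Finset.sum_insert hj]
      exact (((hz j).smul (hW i j)).add ih)
  have h2 : ConvexOn ℝ Set.univ (fun x : Fin n → ℝ => V.mulVec x i + ω i) := by
    refine ⟨convex_univ, ?_⟩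
    intro x _ y _ a b ha hb hab
    apply le_of_eq
    simp only [mulVec, dotProduct, Pi.add_apply, Pi.smul_apply, smul_eq_mul]
    rw [mul_add, mul_add, Finset.mul_sum, Finset.mul_sum]
    rw [add_add_add_comm, ← Finset.sum_add_distrib, ← add_mul, hab, one_mul]
    congr 1
    exact Finset.sum_congr rfl fun l _ => by ring
  have hg : ConvexOn ℝ Set.univ
      (fun x => (W.mulVec (z x) + V.mulVec x + ω) i) := by
    have := (h1 Finset.univ).add h2
    have e : (fun x => (W.mulVec (z x) + V.mulVec x + ω) i) =
        ((fun x => ∑ j, W i j * z x j) + fun x => (V *ᵥ x) i + ω i) := by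
      funext x
      simp [mulVec, dotProduct, add_assoc]
    rw [e]
    exact this
  refine ⟨convex_univ, fun x _ y _ a b ha hb hab => ?_⟩
  calc φ _ ≤ φ (a • ((W.mulVec (z x) + V.mulVec x + ω) i)
        + b • ((W.mulVec (z y) + V.mulVec y + ω) i)) :=
        hφ_mono (hg.2 trivial trivial ha hb hab)
    _ ≤ _ := hφ_convex.2 trivial trivial ha hb hab
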